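/- Fix a real number p with 0 < p < 1/2. For every k ∈ ℕ, every state (a,b) with a ≤ b+1, and every c ∈ ℕ: g_k(a+c, b+c) − g_k(a,b) ≤ c · (p/(1−p))^{1+b−a}. -/

import Mathlib

/-- The strategic miner's optimal expected gain over `k` levels in the
immediate-release game, starting from the state where his branch has length `a`
and the honest miners' branch has length `b` (meaningful for `a ≤ b + 1`).
We have `gain p 0 a b = 0`; for `k ≥ 1`, at a winning state (`a = b + 1`) the
miner is paid `b + 1` and the game restarts at `(0,0)` one level later;
otherwise he may capitulate to any state `(0, s)` with `s < b` (taking the best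
such option) or keep mining, in which case he advances to `(a+1, b)` with
probability `p` and the honest miners advance to `(a, b+1)` (one level deeper)
with probability `1 - p`. -/
noncomputable def gain (p : ℝ) : ℕ → ℕ → ℕ → ℝ
  | 0, _, _ => 0
  | k + 1, a, b =>
    if h : b + 1 ≤ a then
      gain p k 0 0 + (b + 1 : ℕ)
    else
      ((List.range b).attach.map (fun s => gain p (k + 1) 0 s.1)).foldr max
        (p * gain p (k + 1) (a + 1) b + (1 - p) * gain p k a (b + 1))
termination_by k a b => (k, b, b + 1 - a)
decreasing_by
  all_goals
    first
      | exact Prod.Lex.left _ _ (Nat.lt_succ_self _)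
      | exact Prod.Lex.right _ (Prod.Lex.right _ (by omega))
      | exact Prod.Lex.right _ (Prod.Lex.left _ _ (List.mem_range.mp s.2))

private lemma le_foldr_max (l : List ℝ) (x : ℝ) : x ≤ l.foldr max x := by
  induction l with
  | nil => exact le_refl x
  | cons a t ih => exact le_trans ih (le_max_right a _)

private lemma mem_le_foldr_max {l : List ℝ} {y : ℝ} (x : ℝ) (h : y ∈ l) :
    y ≤ l.foldr max x := by
  induction l with
  | nil => cases h
  | cons a t ih =>
    rcases List.mem_cons.mp h with h | h
    · subst h; exact le_max_left _ _
    · exact le_trans (ih h) (le_max_right _ _)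

private lemma foldr_max_le {l : List ℝ} {x z : ℝ} (hx : x ≤ z)
    (h : ∀ y ∈ l, y ≤ z) : l.foldr max x ≤ z := by
  induction l with
  | nil => exact hx
  | cons a t ih => exact max_le (h a (.head _)) (ih fun y hy => h y (.tail _ hy))

private lemma gain_win (p : ℝ) (k a b : ℕ) (h : b + 1 ≤ a) :
    gain p (k+1) a b = gain p k 0 0 + ((b:ℝ) + 1) := by
  rw [gain, dif_pos h]; push_cast; ring

private lemma gain_mine_le (p : ℝ) (k a b : ℕ) (h : ¬ (b + 1 ≤ a)) :
    p * gain p (k + 1) (a + 1) b + (1 - p) * gain p k a (b + 1) ≤ gain p (k+1) a b := by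
  conv_rhs => rw [gain]
  rw [dif_neg h]
  exact le_foldr_max _ _

private lemma gain_cap_le (p : ℝ) (k a b s : ℕ) (h : ¬ (b + 1 ≤ a)) (hs : s < b) :
    gain p (k+1) 0 s ≤ gain p (k+1) a b := by
  conv_rhs => rw [gain]
  rw [dif_neg h]
  exact mem_le_foldr_max _
    (List.mem_map_of_mem (f := fun s : {x // x ∈ List.range b} => gain p (k + 1) 0 s.1)
      (List.mem_attach _ ⟨s, List.mem_range.mpr hs⟩))

private lemma gain_le (p : ℝ) (k a b : ℕ) (X : ℝ) (h : ¬ (b + 1 ≤ a))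
    (hmine : p * gain p (k + 1) (a + 1) b + (1 - p) * gain p k a (b + 1) ≤ X)
    (hcap : ∀ s < b, gain p (k+1) 0 s ≤ X) :
    gain p (k+1) a b ≤ X := by
  conv_lhs => rw [gain]
  rw [dif_neg h]
  refine foldr_max_le hmine ?_
  intro y hy
  obtain ⟨⟨s, hs⟩, -, rfl⟩ := List.mem_map.mp hy
  exact hcap s (List.mem_range.mp hs)

private lemma combine_step (p : ℝ) (hp0 : 0 < p) (hp1 : 0 < 1 - p) (e : ℕ)
    (W A B A' B' C : ℝ)
    (h1 : A ≤ A' + W * (p / (1 - p)) ^ e)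
    (h2 : B ≤ B' + W * (p / (1 - p)) ^ (e + 2))
    (h3 : p * A' + (1 - p) * B' ≤ C) :
    p * A + (1 - p) * B ≤ C + W * (p / (1 - p)) ^ (e + 1) := by
  have key : p * (p / (1-p)) ^ e + (1 - p) * (p / (1-p)) ^ (e + 2)
      = (p / (1-p)) ^ (e + 1) := by
    rw [pow_succ, pow_succ]
    have h1p : (1:ℝ) - p ≠ 0 := ne_of_gt hp1
    field_simp
    ring
  calc p * A + (1 - p) * B
      ≤ p * (A' + W * (p / (1-p)) ^ e) + (1 - p) * (B' + W * (p / (1-p)) ^ (e + 2)) :=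
        add_le_add (mul_le_mul_of_nonneg_left h1 hp0.le)
          (mul_le_mul_of_nonneg_left h2 hp1.le)
    _ = (p * A' + (1 - p) * B')
        + W * (p * (p / (1-p)) ^ e + (1 - p) * (p / (1-p)) ^ (e + 2)) := by ring
    _ = (p * A' + (1 - p) * B') + W * (p / (1-p)) ^ (e + 1) := by rw [key]
    _ ≤ C + W * (p / (1-p)) ^ (e + 1) := by linarith

private theorem gain_master (p : ℝ) (hp0 : 0 < p) (hp : p < 1 / 2) (k α β a b : ℕ)
    (hab : a ≤ b + 1) (hs1 : b ≤ β) (hs2 : α + b ≤ a + β) :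
    gain p k α β ≤ gain p k a b +
      (if α + b = a + β then ((β - b : ℕ) : ℝ) else ((β - b + 1 : ℕ) : ℝ))
        * (p / (1 - p)) ^ (1 + b - a) := by
  have hp1 : (0:ℝ) < 1 - p := by linarith
  have hρ0 : (0:ℝ) ≤ p / (1 - p) := by positivity
  match k with
  | 0 =>
    have h0 : ∀ x y : ℕ, gain p 0 x y = 0 := fun x y => by rw [gain]
    rw [h0, h0]
    split <;> positivity
  | k + 1 =>
    by_cases hw : β + 1 ≤ α
    · -- shifted state is winning; then a = b + 1 and the shift is exact
      have ha : a = b + 1 := by omega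
      have hα : α = β + 1 := by omega
      subst ha hα
      rw [gain_win p k _ _ (le_refl _), gain_win p k _ _ (le_refl _),
        if_pos (by omega), show 1 + b - (b + 1) = 0 from by omega, pow_zero]
      rw [Nat.cast_sub hs1]

      linarith
    · have hα : α ≤ β := by omega
      by_cases hab' : a ≤ b
      · -- base state is not winning
        have hnb : ¬ (b + 1 ≤ a) := by omega
        have he0 : 1 + b - a = (b - a) + 1 := by omega
        rw [he0]
        refine gain_le p k α β _ hw ?_ ?_
        · -- mining option
          have r1 := gain_master p hp0 hp (k+1) (α+1) β (a+1) b (by omega) hs1 (by omega)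
          have r2 := gain_master p hp0 hp k α (β+1) a (b+1) (by omega) (by omega) (by omega)
          rw [show 1 + b - (a + 1) = b - a from by omega,
            if_congr (show (α + 1 + b = a + 1 + β) ↔ (α + b = a + β) from by omega) rfl rfl] at r1
          rw [show 1 + (b + 1) - a = (b - a) + 2 from by omega,
            show β + 1 - (b + 1) = β - b from by omega,
            if_congr (show (α + (b + 1) = a + (β + 1)) ↔ (α + b = a + β) from by omega) rfl rfl] at r2
          exact combine_step p hp0 hp1 (b - a) _ _ _ _ _ _ r1 r2 (gain_mine_le p k a b hnb)
        · -- capitulation options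
          intro s hsβ
          by_cases hsb : s < b
          · refine le_trans (gain_cap_le p k a b s hnb hsb) ?_
            have : (0:ℝ) ≤ (if α + b = a + β then ((β - b : ℕ) : ℝ) else ((β - b + 1 : ℕ) : ℝ))
                * (p / (1-p)) ^ ((b - a) + 1) := by
              apply mul_nonneg _ (by positivity)
              split <;> positivity
            linarith
          · have r := gain_master p hp0 hp (k+1) 0 s a b hab (by omega) (by omega)
            rw [show 1 + b - a = (b - a) + 1 from by omega] at r
            refine le_trans r ?_
            have hA : (if 0 + b = a + s then ((s - b : ℕ) : ℝ) else ((s - b + 1 : ℕ) : ℝ))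
                ≤ ((β - b : ℕ) : ℝ) := by
              split
              · have h' : s - b ≤ β - b := by omega
                exact Nat.cast_le.mpr h'
              · have h' : s - b + 1 ≤ β - b := by omega
                exact Nat.cast_le.mpr h'
            have hB : ((β - b : ℕ) : ℝ)
                ≤ (if α + b = a + β then ((β - b : ℕ) : ℝ) else ((β - b + 1 : ℕ) : ℝ)) := by
              split
              · exact le_refl _
              · have h' : β - b ≤ β - b + 1 := by omega
                exact Nat.cast_le.mpr h'
            have := mul_le_mul_of_nonneg_right (le_trans hA hB)
              (pow_nonneg hρ0 ((b - a) + 1))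
            linarith
      · -- base state winning: a = b + 1
        have ha : a = b + 1 := by omega
        subst ha
        rw [gain_win p k _ _ (le_refl _), if_neg (by omega),
          show 1 + b - (b + 1) = 0 from by omega, pow_zero, mul_one]
        have hcast : ((β - b + 1 : ℕ) : ℝ) = (β:ℝ) - (b:ℝ) + 1 := by
          push_cast [Nat.cast_sub hs1]; ring
        refine gain_le p k α β _ hw ?_ ?_
        · -- mining option
          have r1 := gain_master p hp0 hp (k+1) (α+1) β (b+1) b (by omega) hs1 (by omega)
          rw [gain_win p k _ _ (le_refl _), show 1 + b - (b + 1) = 0 from by omega, pow_zero,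
            mul_one] at r1
          have hr1 : gain p (k+1) (α+1) β ≤ gain p k 0 0 + ((b:ℝ) + 1) + ((β - b + 1 : ℕ) : ℝ) := by
            refine le_trans r1 ?_
            have : (if α + 1 + b = b + 1 + β then ((β - b : ℕ) : ℝ) else ((β - b + 1 : ℕ) : ℝ))
                ≤ ((β - b + 1 : ℕ) : ℝ) := by
              split
              · have h' : β - b ≤ β - b + 1 := by omega
                exact Nat.cast_le.mpr h'
              · exact le_refl _
            linarith
          have r2 := gain_master p hp0 hp k α (β+1) 0 0 (by omega) (by omega) (by omega)
          rw [if_neg (by omega), pow_one] at r2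
          simp only [Nat.sub_zero] at r2
          have hq : (1 - p) * (p / (1 - p)) = p := by field_simp
          have hcast2 : ((β + 1 + 1 : ℕ) : ℝ) = (β:ℝ) + 2 := by push_cast; ring
          rw [hcast2] at r2
          calc p * gain p (k+1) (α+1) β + (1 - p) * gain p k α (β+1)
              ≤ p * (gain p k 0 0 + ((b:ℝ) + 1) + ((β - b + 1 : ℕ) : ℝ))
                + (1 - p) * (gain p k 0 0 + ((β:ℝ) + 2) * (p / (1 - p))) := by
                exact add_le_add (mul_le_mul_of_nonneg_left hr1 hp0.le)
                  (mul_le_mul_of_nonneg_left r2 hp1.le)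
            _ = gain p k 0 0 + p * (((b:ℝ) + 1) + ((β - b + 1 : ℕ) : ℝ))
                + ((β:ℝ) + 2) * ((1 - p) * (p / (1 - p))) := by ring
            _ = gain p k 0 0 + p * ((β:ℝ) + 2) + ((β:ℝ) + 2) * p := by
                rw [hq, hcast]; ring
            _ ≤ gain p k 0 0 + ((b:ℝ) + 1) + ((β - b + 1 : ℕ) : ℝ) := by
                rw [hcast]
                nlinarith
        · -- capitulation options
          intro s hsβ
          have r := gain_master p hp0 hp (k+1) 0 s (s+1) s (le_refl _) (le_refl _) (by omega)
          rw [gain_win p k _ _ (le_refl _), if_neg (by omega),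
            show 1 + s - (s + 1) = 0 from by omega, pow_zero, mul_one] at r
          refine le_trans r ?_
          have h1 : ((s - s + 1 : ℕ) : ℝ) = 1 := by norm_num
          rw [h1, hcast]
          have h2 : (s:ℝ) < (β:ℝ) := by exact_mod_cast hsβ
          have h3 : (b:ℝ) ≤ (β:ℝ) := by exact_mod_cast hs1
          linarith
  termination_by (k, β, β + 1 - α)
  decreasing_by
    all_goals
      first
        | exact Prod.Lex.left _ _ (by omega)
        | exact Prod.Lex.right _ (Prod.Lex.left _ _ (by omega))
        | exact Prod.Lex.right _ (Prod.Lex.right _ (by omega))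

/-- For every `k`, every state `(a, b)` with `a ≤ b + 1`, and every shift
`c ∈ ℕ`: `g_k(a+c, b+c) − g_k(a,b) ≤ c·(p/(1−p))^{1+b−a}`. -/
theorem gain_shift_bound (p : ℝ) (hp0 : 0 < p) (hp : p < 1 / 2) :
    ∀ (k a b c : ℕ), a ≤ b + 1 →
      gain p k (a + c) (b + c) - gain p k a b
        ≤ (c : ℝ) * (p / (1 - p)) ^ (1 + b - a) := by
  intro k a b c h
  have r := gain_master p hp0 hp k (a + c) (b + c) a b h (by omega) (by omega)
  rw [if_pos (by omega), show b + c - b = c from by omega] at r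
  linarith
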